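/- arXiv:2409.09034 — 2 statements merged into one kernel-verified Lean document; each statement's English description precedes it below -/
import Mathlib

section
/- Let A be a square real matrix, t, λ_i, λ_j real numbers, and β_i, β_j nonzero reals. Then β_i²(A^⊤−(t+λ_j)I)(A−(t+λ_j)I) + β_j²(A^⊤−(t+λ_i)I)(A−(t+λ_i)I) = (√(β_i²+β_j²) A^⊤ − μ I)(√(β_i²+β_j²) A − μ I) + (β_i²β_j²(λ_i−λ_j)²/(β_i²+β_j²)) I, where μ = (β_i²(t+λ_j)+β_j²(t+λ_i))/√(β_i²+β_j²). -/
open Matrix BigOperators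

/-- The coupling identity (3.13)/(3.15). -/
theorem stmt8 {n : ℕ} (A : Matrix (Fin n) (Fin n) ℝ) (t li lj bi bj : ℝ)
    (hbi : bi ≠ 0) (hbj : bj ≠ 0) :
    bi ^ 2 • ((Aᵀ - (t + lj) • (1 : Matrix (Fin n) (Fin n) ℝ)) *
        (A - (t + lj) • (1 : Matrix (Fin n) (Fin n) ℝ)))
      + bj ^ 2 • ((Aᵀ - (t + li) • (1 : Matrix (Fin n) (Fin n) ℝ)) *
        (A - (t + li) • (1 : Matrix (Fin n) (Fin n) ℝ)))
    = (Real.sqrt (bi ^ 2 + bj ^ 2) • Aᵀ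
        - ((bi ^ 2 * (t + lj) + bj ^ 2 * (t + li)) / Real.sqrt (bi ^ 2 + bj ^ 2)) •
            (1 : Matrix (Fin n) (Fin n) ℝ)) *
      (Real.sqrt (bi ^ 2 + bj ^ 2) • A
        - ((bi ^ 2 * (t + lj) + bj ^ 2 * (t + li)) / Real.sqrt (bi ^ 2 + bj ^ 2)) •
            (1 : Matrix (Fin n) (Fin n) ℝ))
      + (bi ^ 2 * bj ^ 2 * (li - lj) ^ 2 / (bi ^ 2 + bj ^ 2)) •
          (1 : Matrix (Fin n) (Fin n) ℝ) := by
  have hs : (0:ℝ) < bi ^ 2 + bj ^ 2 := by positivity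
  have hsq : Real.sqrt (bi ^ 2 + bj ^ 2) * Real.sqrt (bi ^ 2 + bj ^ 2) = bi ^ 2 + bj ^ 2 :=
    Real.mul_self_sqrt hs.le
  have hsn : Real.sqrt (bi ^ 2 + bj ^ 2) ≠ 0 := by positivity
  simp only [sub_mul, mul_sub, Matrix.smul_mul, Matrix.mul_smul, smul_smul,
    Matrix.mul_one, Matrix.one_mul]
  match_scalars <;> field_simp <;> ring_nf <;> simp only [Real.sq_sqrt hs.le] <;> ring_nf
end

section
/- Let A ∈ ℝ^{n×n}, λ_1,...,λ_n real, β_1,...,β_n nonzero reals, and suppose A − λ_i I is nonsingular for every i. Then det of the block matrix with diagonal blocks (A−λ_iI)(A^⊤−λ_iI)+β_i²I and off-diagonal (i,j) blocks β_iβ_jI equals det( Π_{ℓ=1}^n(A^⊤−λ_ℓI) · Π_{ℓ=1}^n(A−λ_ℓI) + Σ_{i=1}^n β_i² Π_{ℓ≠i}(A^⊤−λ_ℓI) · Π_{ℓ≠i}(A−λ_ℓI) ). -/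
open Matrix BigOperators

/-- Schur-complement evaluation of `det C` when every `A − λ_i I` is nonsingular. -/
theorem stmt12 {n : ℕ} (A : Matrix (Fin n) (Fin n) ℝ) (lam β : Fin n → ℝ)
    (hβ : ∀ i, β i ≠ 0)
    (hinv : ∀ i, IsUnit (A - lam i • (1 : Matrix (Fin n) (Fin n) ℝ)))
    (C : Matrix (Fin n × Fin n) (Fin n × Fin n) ℝ)
    (hC : ∀ i k j l : Fin n, C (i, k) (j, l) =
      if i = j then
        ((A - lam i • (1 : Matrix (Fin n) (Fin n) ℝ)) *
          (Aᵀ - lam i • (1 : Matrix (Fin n) (Fin n) ℝ))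
          + (β i) ^ 2 • (1 : Matrix (Fin n) (Fin n) ℝ)) k l
      else β i * β j * (if k = l then 1 else 0)) :
    C.det =
      ( ((List.finRange n).map
            (fun ℓ => Aᵀ - lam ℓ • (1 : Matrix (Fin n) (Fin n) ℝ))).prod *
        ((List.finRange n).map
            (fun ℓ => A - lam ℓ • (1 : Matrix (Fin n) (Fin n) ℝ))).prod
        + ∑ i : Fin n, (β i) ^ 2 •
            ( (((List.finRange n).filter (fun ℓ => ℓ ≠ i)).map
                  (fun ℓ => Aᵀ - lam ℓ • (1 : Matrix (Fin n) (Fin n) ℝ))).prod *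
              (((List.finRange n).filter (fun ℓ => ℓ ≠ i)).map
                  (fun ℓ => A - lam ℓ • (1 : Matrix (Fin n) (Fin n) ℝ))).prod ) ).det := by
  classical
  set M : Fin n → Matrix (Fin n) (Fin n) ℝ := fun i => A - lam i • 1 with hMdef
  set N : Fin n → Matrix (Fin n) (Fin n) ℝ := fun i => Aᵀ - lam i • 1 with hNdef
  have hNT : ∀ i, N i = (M i)ᵀ := by
    intro i; simp [hMdef, hNdef, Matrix.transpose_sub, Matrix.transpose_smul]
  have hinvN : ∀ i, IsUnit (N i) := by
    intro i
    rw [Matrix.isUnit_iff_isUnit_det, hNT, Matrix.det_transpose,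
      ← Matrix.isUnit_iff_isUnit_det]
    exact hinv i
  set Mi : Fin n → Matrix (Fin n) (Fin n) ℝ := fun i => ((hinv i).unit⁻¹ : _) with hMidef
  set Ni : Fin n → Matrix (Fin n) (Fin n) ℝ := fun i => ((hinvN i).unit⁻¹ : _) with hNidef
  have hMM : ∀ i, M i * Mi i = 1 := fun i => by
    simpa [hMidef] using (hinv i).unit.mul_inv
  have hMM' : ∀ i, Mi i * M i = 1 := fun i => by
    simpa [hMidef] using (hinv i).unit.inv_mul
  have hNN : ∀ i, N i * Ni i = 1 := fun i => by
    simpa [hNidef] using (hinvN i).unit.mul_inv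
  have hNN' : ∀ i, Ni i * N i = 1 := fun i => by
    simpa [hNidef] using (hinvN i).unit.inv_mul
  -- commutation
  have hcommM : ∀ j k, Commute (M j) (M k) := by
    intro j k
    have h1 : Commute A (M k) :=
      (Commute.refl A).sub_right ((Commute.one_right A).smul_right _)
    have h2 : Commute (lam j • (1 : Matrix (Fin n) (Fin n) ℝ)) (M k) :=
      (Commute.one_left (M k)).smul_left _
    exact h1.sub_left h2
  have hcommN : ∀ j k, Commute (N j) (N k) := by
    intro j k
    show N j * N k = N k * N j
    rw [hNT, hNT, ← Matrix.transpose_mul, ← Matrix.transpose_mul]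
    exact congrArg Matrix.transpose (hcommM k j).eq
  -- list products
  set P : Matrix (Fin n) (Fin n) ℝ := ((List.finRange n).map N).prod with hPdef
  set Q : Matrix (Fin n) (Fin n) ℝ := ((List.finRange n).map M).prod with hQdef
  set Pi : Fin n → Matrix (Fin n) (Fin n) ℝ :=
    fun i => (((List.finRange n).filter (fun ℓ => ℓ ≠ i)).map N).prod with hPidef
  set Qi : Fin n → Matrix (Fin n) (Fin n) ℝ :=
    fun i => (((List.finRange n).filter (fun ℓ => ℓ ≠ i)).map M).prod with hQidef
  have hfilter : ∀ i : Fin n,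
      (List.finRange n).filter (fun ℓ => ℓ ≠ i) = (List.finRange n).erase i := by
    intro i
    rw [(List.nodup_finRange n).erase_eq_filter]
    congr 1
    funext x
    by_cases h : x = i <;> simp [h]
  have hperm : ∀ i : Fin n,
      (List.finRange n).Perm (i :: (List.finRange n).filter (fun ℓ => ℓ ≠ i)) := by
    intro i
    rw [hfilter]
    exact List.perm_cons_erase (List.mem_finRange i)
  have hpairM : List.Pairwise Commute ((List.finRange n).map M) := by
    rw [List.pairwise_map]
    exact List.pairwise_iff_forall_sublist.2 (fun _ => hcommM _ _)
  have hpairN : List.Pairwise Commute ((List.finRange n).map N) := by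
    rw [List.pairwise_map]
    exact List.pairwise_iff_forall_sublist.2 (fun _ => hcommN _ _)
  have hQsplit : ∀ i, Q = M i * Qi i := by
    intro i
    rw [hQdef, List.Perm.prod_eq' ((hperm i).map M) hpairM]
    simp [hQidef]
  have hPsplit : ∀ i, P = N i * Pi i := by
    intro i
    rw [hPdef, List.Perm.prod_eq' ((hperm i).map N) hpairN]
    simp [hPidef]
  have hPcomm : ∀ i, Commute (N i) (Pi i) := by
    intro i
    refine Commute.list_prod_right _ _ ?_
    intro x hx
    obtain ⟨a, _, rfl⟩ := List.mem_map.1 hx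
    exact hcommN i a
  have hPi : ∀ i, Pi i = P * Ni i := by
    intro i
    have := hPsplit i
    rw [(hPcomm i).eq] at this
    rw [this, Matrix.mul_assoc, hNN, Matrix.mul_one]
  have hQi : ∀ i, Qi i = Mi i * Q := by
    intro i
    rw [hQsplit i, ← Matrix.mul_assoc, hMM', Matrix.one_mul]
  -- Schur factor
  set S : Matrix (Fin n) (Fin n) ℝ := ∑ i : Fin n, (β i) ^ 2 • (Ni i * Mi i) with hSdef
  -- RHS rewrite
  have hRHS : P * Q + ∑ i : Fin n, (β i) ^ 2 • (Pi i * Qi i) = P * (1 + S) * Q := by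
    rw [mul_add, Matrix.mul_one, add_mul, hSdef, Finset.mul_sum, Finset.sum_mul]
    congr 1
    refine Finset.sum_congr rfl (fun i _ => ?_)
    rw [hPi, hQi, mul_smul_comm, smul_mul_assoc, Matrix.mul_assoc, Matrix.mul_assoc]
    simp only [Matrix.mul_assoc]
  -- block matrices
  set e : (Fin n × Fin n) ≃ (Fin n × Fin n) := Equiv.prodComm _ _ with hedef
  set D : Matrix (Fin n × Fin n) (Fin n × Fin n) ℝ :=
    (Matrix.blockDiagonal (fun i => M i * N i)).submatrix e e with hDdef
  set E : Matrix (Fin n × Fin n) (Fin n × Fin n) ℝ :=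
    (Matrix.blockDiagonal (fun i => Ni i * Mi i)).submatrix e e with hEdef
  have hED : E * D = 1 := by
    rw [hEdef, hDdef, Matrix.submatrix_mul_equiv, ← Matrix.blockDiagonal_mul]
    have : (fun k => Ni k * Mi k * (M k * N k)) = (1 : Fin n → Matrix (Fin n) (Fin n) ℝ) := by
      funext k
      rw [Matrix.mul_assoc, ← Matrix.mul_assoc (Mi k), hMM', Matrix.one_mul, hNN']
      rfl
    rw [this, Matrix.blockDiagonal_one, Matrix.submatrix_one_equiv]
  set U : Matrix (Fin n × Fin n) (Fin n) ℝ :=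
    fun p l => β p.1 * (if p.2 = l then 1 else 0) with hUdef
  set V : Matrix (Fin n) (Fin n × Fin n) ℝ :=
    fun k q => β q.1 * (if k = q.2 then 1 else 0) with hVdef
  have hCD : C = D + U * V := by
    ext ⟨i, k⟩ ⟨j, l⟩
    rw [hC]
    have hUV : (U * V) (i, k) (j, l) = β i * β j * (if k = l then 1 else 0) := by
      rw [Matrix.mul_apply]; simp only [hUdef, hVdef]
      simp [mul_ite, ite_mul, Finset.sum_ite_eq]
    simp only [Matrix.add_apply]
    rw [hUV, hDdef]
    simp only [Matrix.submatrix_apply, hedef, Equiv.prodComm_apply, Prod.swap_prod_mk,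
      Matrix.blockDiagonal_apply]
    by_cases h : i = j
    · subst h
      simp [Matrix.add_apply, Matrix.smul_apply, Matrix.one_apply, pow_two, smul_eq_mul,
        mul_ite, mul_one, mul_zero]
      rfl
    · simp [h]
  have hCfact : C = (1 + U * V * E) * D := by
    rw [add_mul, Matrix.one_mul, Matrix.mul_assoc, hED, Matrix.mul_one, hCD]
  -- the small determinant
  have hVEU : V * E * U = S := by
    ext k l
    rw [hSdef]
    have hVE : ∀ q : Fin n × Fin n, (V * E) k q = β q.1 * (Ni q.1 * Mi q.1) k q.2 := by
      intro q
      rw [Matrix.mul_apply]; simp only [hVdef, hEdef, Matrix.submatrix_apply, hedef,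
        Equiv.prodComm_apply, Prod.swap_prod_mk, Matrix.blockDiagonal_apply]
      rw [Fintype.sum_prod_type]
      simp [mul_ite, ite_mul, Finset.sum_ite_eq, Finset.sum_ite_eq']
    rw [Matrix.mul_apply]; simp only [hVE, hUdef]
    rw [Fintype.sum_prod_type]
    simp only [Matrix.sum_apply, Matrix.smul_apply, smul_eq_mul]
    refine Finset.sum_congr rfl (fun j _ => ?_)
    simp only [mul_ite, ite_mul, mul_one, mul_zero, Finset.sum_ite_eq, Finset.sum_ite_eq',
      Finset.mem_univ, if_true, Matrix.mul_apply]
    ring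
  -- determinants
  have hdetD : D.det = Q.det * P.det := by
    rw [hDdef, Matrix.det_submatrix_equiv_self, Matrix.det_blockDiagonal]
    have h1 : Q.det = ∏ i : Fin n, (M i).det := by
      have hmp := Matrix.detMonoidHom.map_list_prod (List.map M (List.finRange n))
      simp only [Matrix.coe_detMonoidHom, List.map_map] at hmp
      rw [hQdef, hmp, Fin.prod_univ_def]
      rfl
    have h2 : P.det = ∏ i : Fin n, (N i).det := by
      have hmp := Matrix.detMonoidHom.map_list_prod (List.map N (List.finRange n))
      simp only [Matrix.coe_detMonoidHom, List.map_map] at hmp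
      rw [hPdef, hmp, Fin.prod_univ_def]
      rfl
    rw [h1, h2, ← Finset.prod_mul_distrib]
    exact Finset.prod_congr rfl (fun i _ => Matrix.det_mul _ _)
  calc C.det = ((1 + U * V * E) * D).det := by rw [← hCfact]
    _ = (1 + U * V * E).det * D.det := Matrix.det_mul _ _
    _ = (1 + (V * E) * U).det * D.det := by
        rw [Matrix.mul_assoc, Matrix.det_one_add_mul_comm]
    _ = (1 + S).det * (Q.det * P.det) := by rw [hVEU, hdetD]
    _ = (P * (1 + S) * Q).det := by
        rw [Matrix.det_mul, Matrix.det_mul]; ring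
    _ = (P * Q + ∑ i : Fin n, (β i) ^ 2 • (Pi i * Qi i)).det := by rw [hRHS]
end
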